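/- Let 𝓡 be a canonical representation mapping for the reduction of G to G' that respects kernel orbits: v₁ occurs in 𝓡(v) iff v₂ occurs in 𝓡(v) whenever v₁ and v₂ lie in the same orbit of ker(p), where p: Aut(G) → Aut(G') is the restriction homomorphism. Then for every ψ ∈ Aut(G) with p(ψ) = φ, the lift satisfies |supp(φ_𝓡)| ≤ |supp(ψ)|. -/

import Mathlib

namespace Sassy

/-- A coloring is equitable if vertices of the same color have the same number of
neighbors in every color class. -/
def Equitable {V C : Type*} (G : SimpleGraph V) (π : V → C) : Prop :=
  ∀ v w, π v = π w → ∀ c : C,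
    {u | G.Adj v u ∧ π u = c}.ncard = {u | G.Adj w u ∧ π u = c}.ncard

/-- `φ` is a color-preserving automorphism of the colored graph `(G, π)`. -/
def IsAut {V C : Type*} (G : SimpleGraph V) (π : V → C) (φ : Equiv.Perm V) : Prop :=
  (∀ v w, G.Adj (φ v) (φ w) ↔ G.Adj v w) ∧ ∀ v, π (φ v) = π v

/-- The automorphism group of a colored graph, as a subgroup of `Equiv.Perm V`. -/
def Aut {V C : Type*} (G : SimpleGraph V) (π : V → C) : Subgroup (Equiv.Perm V) where
  carrier := {φ | IsAut G π φ}
  one_mem' := ⟨fun _ _ => Iff.rfl, fun _ => rfl⟩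
  mul_mem' := by
    rintro a b ⟨ha1, ha2⟩ ⟨hb1, hb2⟩
    refine ⟨fun v w => ?_, fun v => ?_⟩
    · simpa [Equiv.Perm.mul_apply] using (ha1 (b v) (b w)).trans (hb1 v w)
    · simp [Equiv.Perm.mul_apply, ha2, hb2]
  inv_mem' := by
    rintro a ⟨ha1, ha2⟩
    refine ⟨fun v w => ?_, fun v => ?_⟩
    · conv_rhs => rw [← (Equiv.Perm.eq_inv_iff_eq.mp rfl : a (a⁻¹ v) = v), ← (Equiv.Perm.eq_inv_iff_eq.mp rfl : a (a⁻¹ w) = w)]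
      exact (ha1 _ _).symm
    · conv_rhs => rw [← (Equiv.Perm.eq_inv_iff_eq.mp rfl : a (a⁻¹ v) = v)]
      exact (ha2 _).symm

end Sassy

/-- If the canonical representation mapping R respects kernel
orbits, then for every ψ ∈ Aut(G) with p(ψ) = φ, the support of the lift φ_R
is at most the support of ψ. -/
theorem stmt13 {V C : Type*} [Fintype V] (G : SimpleGraph V) (π : V → C)
    (V' : Set V) (G' : SimpleGraph V') (π' : V' → C) (R : V → List V)
    (h1 : ∀ v ∈ V', ∃ S : List V, R v = v :: S)
    (h2 : ∀ v ∉ V', R v = [])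
    (h3 : ∀ v, v ∉ V' → ∀ (v₁ v₂ : ↥V') (i j : ℕ)
      (hi : i < (R v₁.1).length) (hj : j < (R v₂.1).length),
      (R v₁.1).get ⟨i, hi⟩ = v → (R v₂.1).get ⟨j, hj⟩ = v → v₁ = v₂ ∧ i = j)
    (p : ↥(Sassy.Aut G π) →* ↥(Sassy.Aut G' π'))
    (hp_restrict : ∀ (ψ : ↥(Sassy.Aut G π)) (v' : ↥V'), ((p ψ).1 v').1 = ψ.1 v'.1)
    (lift : ↥(Sassy.Aut G' π') → ↥(Sassy.Aut G π))
    (hlen : ∀ (φ : ↥(Sassy.Aut G' π')) (v' : ↥V'),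
      (R (φ.1 v').1).length = (R v'.1).length)
    (hlift_rep : ∀ (φ : ↥(Sassy.Aut G' π')) (v' : ↥V') (i : ℕ), i < (R v'.1).length →
      (lift φ).1 ((R v'.1).getD i v'.1) = (R (φ.1 v').1).getD i v'.1)
    (hlift_fix : ∀ (φ : ↥(Sassy.Aut G' π')) (v : V), (∀ v' : ↥V', v ∉ R v'.1) →
      (lift φ).1 v = v)
    (hrespect : ∀ v₁ v₂ : V, (∃ k ∈ p.ker, k.1 v₁ = v₂) →
      ∀ v : V, (v₁ ∈ R v ↔ v₂ ∈ R v)) :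
    ∀ (ψ : ↥(Sassy.Aut G π)) (φ : ↥(Sassy.Aut G' π')), p ψ = φ →
      {v : V | (lift φ).1 v ≠ v}.ncard ≤ {v : V | ψ.1 v ≠ v}.ncard := by
  
  intro ψ φ hψφ
  -- ψ agrees with φ on V'
  have hψres : ∀ v' : ↥V', ψ.1 v'.1 = (φ.1 v').1 := by
    intro v'; rw [← hψφ]; exact (hp_restrict ψ v').symm
  -- lift φ agrees with φ on V'
  have hlift_on : ∀ v' : ↥V', (lift φ).1 v'.1 = (φ.1 v').1 := by
    intro v'
    obtain ⟨S, hS⟩ := h1 v'.1 v'.2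
    obtain ⟨S', hS'⟩ := h1 (φ.1 v').1 (φ.1 v').2
    have h0 : (0:ℕ) < (R v'.1).length := by rw [hS]; simp
    have := hlift_rep φ v' 0 h0
    rw [hS, hS'] at this
    simpa using this
  -- p (lift φ) = φ
  have hplift : p (lift φ) = φ := by
    apply Subtype.ext
    apply Equiv.ext
    intro x
    apply Subtype.ext
    rw [hp_restrict (lift φ) x, hlift_on x]
  -- the kernel element k = lift φ * ψ⁻¹
  set k : ↥(Sassy.Aut G π) := lift φ * ψ⁻¹ with hk
  have hker : k ∈ p.ker := by
    rw [MonoidHom.mem_ker, hk, map_mul, map_inv, hplift, hψφ, mul_inv_cancel]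
  -- lift φ maps V' bijectively onto V'
  have hmaps : Set.MapsTo (lift φ).1 V' V' := by
    intro v hv
    have := hlift_on ⟨v, hv⟩
    simp only at this
    rw [this]
    exact (φ.1 ⟨v, hv⟩).2
  have hbij : Set.BijOn (lift φ).1 V' V' :=
    ((Set.toFinite V').injOn_iff_bijOn_of_mapsTo hmaps).mp
      ((lift φ).1.injective.injOn)
  -- main subset claim
  have hsub : {v : V | (lift φ).1 v ≠ v} ⊆ {v : V | ψ.1 v ≠ v} := by
    intro v hv
    simp only [Set.mem_setOf_eq] at hv ⊢
    intro hψv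
    apply hv
    by_cases hmem : ∀ v' : ↥V', v ∉ R v'.1
    · exact hlift_fix φ v hmem
    push_neg at hmem
    obtain ⟨v', hv'⟩ := hmem
    by_cases hvV : v ∈ V'
    · rw [hlift_on ⟨v, hvV⟩]
      rw [← hψres ⟨v, hvV⟩]
      exact hψv
    · -- v ∉ V', occurs at a unique position
      obtain ⟨⟨i, hi⟩, hget⟩ := List.mem_iff_get.mp hv'
      set w := (lift φ).1 v with hw
      have hkv : k.1 v = w := by
        rw [hk]
        show (lift φ).1 (ψ.1⁻¹ v) = w
        have : ψ.1⁻¹ v = v := by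
          apply ψ.1.injective; rw [(Equiv.Perm.eq_inv_iff_eq.mp rfl : ψ.1 (ψ.1⁻¹ v) = v), hψv]
        rw [this]
      -- w = (R (φ v'))[i]
      have hrep := hlift_rep φ v' i hi
      have hgetD : (R v'.1).getD i v'.1 = v := by
        rw [List.getD_eq_get (i := ⟨i, hi⟩), hget]
      rw [hgetD] at hrep
      have hi' : i < (R (φ.1 v').1).length := by rw [hlen φ v']; exact hi
      have hwmem' : w ∈ R (φ.1 v').1 := by
        rw [hw, hrep, List.getD_eq_get (i := ⟨i, hi'⟩)]
        exact List.get_mem _ _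
      -- w ∈ R v' by the kernel-orbit respect
      have hwmem : w ∈ R v'.1 := (hrespect v w ⟨k, hker, hkv⟩ v'.1).mp hv'
      -- w ∉ V'
      have hwV : w ∉ V' := by
        intro hwV
        obtain ⟨u, hu, huw⟩ := hbij.surjOn hwV
        exact hvV (((lift φ).1.injective huw.symm) ▸ hu)
      -- uniqueness of occurrence
      obtain ⟨⟨j, hj⟩, hgetj⟩ := List.mem_iff_get.mp hwmem
      have hgeti : (R (φ.1 v').1).get ⟨i, hi'⟩ = w := by
        rw [hw, hrep, List.getD_eq_get (i := ⟨i, hi'⟩)]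
      obtain ⟨heq, hij⟩ := h3 w hwV (φ.1 v') v' i j hi' hj hgeti hgetj
      rw [hw, hrep, heq, List.getD_eq_get (i := ⟨i, hi⟩), hget]
  exact Set.ncard_le_ncard hsub (Set.toFinite _)
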